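/- In the 5×4 game with rows a,b,c,d,e, columns A,B,C,D, row payoffs u₁(a,B)=12, u₁(b,C)=12, u₁(c,A)=12, u₁(d,·)=5 on A,B,C, u₁(e,·)=7 on A,B,C, u₁(e,D)=1, all other u₁ zero; column payoffs u₂(a,C)=u₂(b,A)=u₂(c,B)=u₂(d,D)=u₂(e,D)=1, all other u₂ zero; and SIS partition {{a,b,c,d},{e}}, every uncorrelated profile with no undetectable beneficial deviations gives the row player expected utility at most 1. -/

import Mathlib

open Finset

/-- Row payoffs of the 5×4 signaling example (rows a,b,c,d,e; columns A,B,C,D). -/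
def sgU1 : Fin 5 → Fin 4 → ℝ :=
  ![![0, 12, 0, 0], ![0, 0, 12, 0], ![12, 0, 0, 0], ![5, 5, 5, 0], ![7, 7, 7, 1]]

/-- Column payoffs of the 5×4 signaling example. -/
def sgU2 : Fin 5 → Fin 4 → ℝ :=
  ![![0, 0, 1, 0], ![1, 0, 0, 0], ![0, 1, 0, 0], ![0, 0, 0, 1], ![0, 0, 0, 1]]

/-- SIS labeling: {a,b,c,d} is one SIS and {e} is the other. -/
def sgSis : Fin 5 → Fin 2 := ![0, 0, 0, 0, 1]

/-- in the 5×4 signaling example, every uncorrelated profile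
with no undetectable beneficial deviations gives the row player expected
utility at most 1. -/
theorem signaling_example_SELO_upper_bound
    (σ1 : Fin 5 → ℝ) (σ2 : Fin 4 → ℝ)
    (hσ1 : (∀ r, 0 ≤ σ1 r) ∧ ∑ r, σ1 r = 1)
    (hσ2 : (∀ c, 0 ≤ σ2 c) ∧ ∑ c, σ2 c = 1)
    (hcol : ∀ c, 0 < σ2 c → ∀ c', ∑ r, σ1 r * sgU2 r c' ≤ ∑ r, σ1 r * sgU2 r c)
    (hrow : ∀ r, 0 < σ1 r → ∀ r', sgSis r' = sgSis r →
        ∑ c, σ2 c * sgU1 r' c ≤ ∑ c, σ2 c * sgU1 r c) :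
    ∑ r, ∑ c, σ1 r * σ2 c * sgU1 r c ≤ 1 := by
  obtain ⟨h1pos, h1sum⟩ := hσ1
  obtain ⟨h2pos, h2sum⟩ := hσ2
  simp only [Fin.sum_univ_five] at h1sum
  simp only [Fin.sum_univ_four] at h2sum
  have ha := h1pos 0; have hb := h1pos 1; have hc := h1pos 2
  have hd := h1pos 3; have he := h1pos 4
  have hp := h2pos 0; have hq := h2pos 1; have hs := h2pos 2; have ht := h2pos 3
  -- row e positive w.r.t. its own SIS is trivial; key: σ2 supported only on D
  -- Step 1 : σ2 1 = 0
  have key1 : σ2 1 = 0 := by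
    by_contra h
    have hq' : 0 < σ2 1 := lt_of_le_of_ne hq (Ne.symm h)
    have cB0 := hcol 1 hq' 0
    have cB2 := hcol 1 hq' 2
    have cB3 := hcol 1 hq' 3
    simp only [Fin.sum_univ_five, sgU2] at cB0 cB2 cB3
    norm_num [Matrix.vecHead, Matrix.vecTail, Matrix.cons_val_zero, Matrix.cons_val_one, Matrix.cons_val_two, Matrix.cons_val_three, Matrix.cons_val_four, Matrix.head_cons] at cB0 cB2 cB3
    have hγ : 0 < σ1 2 := by linarith
    have rc1 := hrow 2 hγ 1 rfl
    have rc0 := hrow 2 hγ 0 rfl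
    have rc3 := hrow 2 hγ 3 rfl
    simp only [Fin.sum_univ_four, sgU1] at rc1 rc0 rc3
    norm_num [Matrix.vecHead, Matrix.vecTail, Matrix.cons_val_zero, Matrix.cons_val_one, Matrix.cons_val_two, Matrix.cons_val_three, Matrix.cons_val_four, Matrix.head_cons] at rc1 rc0 rc3
    have hp' : 0 < σ2 0 := by linarith
    have cA1 := hcol 0 hp' 1
    have cA2 := hcol 0 hp' 2
    have cA3 := hcol 0 hp' 3
    simp only [Fin.sum_univ_five, sgU2] at cA1 cA2 cA3
    norm_num [Matrix.vecHead, Matrix.vecTail, Matrix.cons_val_zero, Matrix.cons_val_one, Matrix.cons_val_two, Matrix.cons_val_three, Matrix.cons_val_four, Matrix.head_cons] at cA1 cA2 cA3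
    have hβ : 0 < σ1 1 := by linarith
    have rb0 := hrow 1 hβ 0 rfl
    have rb2 := hrow 1 hβ 2 rfl
    have rb3 := hrow 1 hβ 3 rfl
    simp only [Fin.sum_univ_four, sgU1] at rb0 rb2 rb3
    norm_num [Matrix.vecHead, Matrix.vecTail, Matrix.cons_val_zero, Matrix.cons_val_one, Matrix.cons_val_two, Matrix.cons_val_three, Matrix.cons_val_four, Matrix.head_cons] at rb0 rb2 rb3
    have hs' : 0 < σ2 2 := by linarith
    have cC0 := hcol 2 hs' 0
    have cC1 := hcol 2 hs' 1
    have cC3 := hcol 2 hs' 3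
    simp only [Fin.sum_univ_five, sgU2] at cC0 cC1 cC3
    norm_num [Matrix.vecHead, Matrix.vecTail, Matrix.cons_val_zero, Matrix.cons_val_one, Matrix.cons_val_two, Matrix.cons_val_three, Matrix.cons_val_four, Matrix.head_cons] at cC0 cC1 cC3
    have hα : 0 < σ1 0 := by linarith
    have ra2 := hrow 0 hα 2 rfl
    have ra1 := hrow 0 hα 1 rfl
    have ra3 := hrow 0 hα 3 rfl
    simp only [Fin.sum_univ_four, sgU1] at ra2 ra1 ra3
    norm_num [Matrix.vecHead, Matrix.vecTail, Matrix.cons_val_zero, Matrix.cons_val_one, Matrix.cons_val_two, Matrix.cons_val_three, Matrix.cons_val_four, Matrix.head_cons] at ra2 ra1 ra3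
    linarith
  -- Step 2 : σ2 2 = 0
  have key2 : σ2 2 = 0 := by
    by_contra h
    have hs' : 0 < σ2 2 := lt_of_le_of_ne hs (Ne.symm h)
    have cC0 := hcol 2 hs' 0
    have cC1 := hcol 2 hs' 1
    have cC3 := hcol 2 hs' 3
    simp only [Fin.sum_univ_five, sgU2] at cC0 cC1 cC3
    norm_num [Matrix.vecHead, Matrix.vecTail, Matrix.cons_val_zero, Matrix.cons_val_one, Matrix.cons_val_two, Matrix.cons_val_three, Matrix.cons_val_four, Matrix.head_cons] at cC0 cC1 cC3
    have hα : 0 < σ1 0 := by linarith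
    have ra1 := hrow 0 hα 1 rfl
    simp only [Fin.sum_univ_four, sgU1] at ra1
    norm_num [Matrix.vecHead, Matrix.vecTail, Matrix.cons_val_zero, Matrix.cons_val_one, Matrix.cons_val_two, Matrix.cons_val_three, Matrix.cons_val_four, Matrix.head_cons] at ra1
    linarith
  -- Step 3 : σ2 0 = 0
  have key0 : σ2 0 = 0 := by
    by_contra h
    have hp' : 0 < σ2 0 := lt_of_le_of_ne hp (Ne.symm h)
    have cA1 := hcol 0 hp' 1
    have cA2 := hcol 0 hp' 2
    have cA3 := hcol 0 hp' 3
    simp only [Fin.sum_univ_five, sgU2] at cA1 cA2 cA3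
    norm_num [Matrix.vecHead, Matrix.vecTail, Matrix.cons_val_zero, Matrix.cons_val_one, Matrix.cons_val_two, Matrix.cons_val_three, Matrix.cons_val_four, Matrix.head_cons] at cA1 cA2 cA3
    have hβ : 0 < σ1 1 := by linarith
    have rb2 := hrow 1 hβ 2 rfl
    simp only [Fin.sum_univ_four, sgU1] at rb2
    norm_num [Matrix.vecHead, Matrix.vecTail, Matrix.cons_val_zero, Matrix.cons_val_one, Matrix.cons_val_two, Matrix.cons_val_three, Matrix.cons_val_four, Matrix.head_cons] at rb2
    linarith
  simp only [Fin.sum_univ_five, Fin.sum_univ_four, sgU1]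
  norm_num [key0, key1, key2, Matrix.cons_val_zero, Matrix.cons_val_one, Matrix.cons_val_two, Matrix.cons_val_three, Matrix.cons_val_four, Matrix.head_cons]
  nlinarith [he, ht]
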